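/- Let A and B be positive semidefinite real symmetric m×m matrices. Then the operator norm of A^{1/2} − B^{1/2} satisfies ‖A^{1/2} − B^{1/2}‖ ≤ √(‖A − B‖), where ‖·‖ denotes the spectral (operator) norm and A^{1/2}, B^{1/2} are the PSD square roots. -/

import Mathlib

open scoped Matrix.Norms.L2Operator

/-- The square root of a positive semidefinite matrix (as defined in Mathlib, Dec 2024). -/
noncomputable def Matrix.PosSemidef.sqrt {n : Type*} [Fintype n] [DecidableEq n]
    {A : Matrix n n ℝ} (hA : A.PosSemidef) : Matrix n n ℝ :=
  (hA.1.eigenvectorUnitary : Matrix n n ℝ) *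
    Matrix.diagonal ((Real.sqrt ·) ∘ hA.1.eigenvalues) *
    (star hA.1.eigenvectorUnitary : Matrix n n ℝ)

theorem Matrix.PosSemidef.posSemidef_sqrt {n : Type*} [Fintype n] [DecidableEq n]
    {A : Matrix n n ℝ} (hA : A.PosSemidef) : hA.sqrt.PosSemidef := by
  have hD : (Matrix.diagonal ((Real.sqrt ·) ∘ hA.1.eigenvalues)).PosSemidef :=
    Matrix.posSemidef_diagonal_iff.mpr fun i => Real.sqrt_nonneg _
  have := hD.mul_mul_conjTranspose_same (hA.1.eigenvectorUnitary : Matrix n n ℝ)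
  unfold Matrix.PosSemidef.sqrt
  simpa [Matrix.star_eq_conjTranspose] using this

theorem Matrix.PosSemidef.sqrt_mul_self {n : Type*} [Fintype n] [DecidableEq n]
    {A : Matrix n n ℝ} (hA : A.PosSemidef) : hA.sqrt * hA.sqrt = A := by
  conv_rhs => rw [hA.1.spectral_theorem, Unitary.conjStarAlgAut_apply]
  have hU : (star hA.1.eigenvectorUnitary : Matrix n n ℝ) *
      (hA.1.eigenvectorUnitary : Matrix n n ℝ) = 1 := by simp
  unfold Matrix.PosSemidef.sqrt
  simp only [Matrix.mul_assoc]
  rw [← Matrix.mul_assoc (star hA.1.eigenvectorUnitary : Matrix n n ℝ), hU, Matrix.one_mul,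
    ← Matrix.mul_assoc (Matrix.diagonal _), Matrix.diagonal_mul_diagonal]
  congr 3
  funext i
  simp [Real.mul_self_sqrt (hA.eigenvalues_nonneg i)]

open Matrix
open scoped RealInnerProductSpace

private lemma euc_inner_eq {m : ℕ} (u v : EuclideanSpace ℝ (Fin m)) :
    ⟪u, v⟫ = (⇑u) ⬝ᵥ (⇑v) := by
  simp [PiLp.inner_apply, dotProduct, mul_comm]

/-- op-norm bound from a mulVec bound -/
private lemma l2_opNorm_le_of_mulVec {m n : ℕ} (A : Matrix (Fin m) (Fin n) ℝ) {r : ℝ}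
    (hr : 0 ≤ r)
    (h : ∀ x : EuclideanSpace ℝ (Fin n),
      ‖(EuclideanSpace.equiv (Fin m) ℝ).symm (A *ᵥ x)‖ ≤ r * ‖x‖) :
    ‖A‖ ≤ r := by
  rw [Matrix.l2_opNorm_def]
  exact ContinuousLinearMap.opNorm_le_bound _ hr h

/-- a Hermitian matrix whose eigenvalues are bounded by `r` has op-norm at most `r`. -/
private lemma herm_opNorm_le {m : ℕ} {C : Matrix (Fin m) (Fin m) ℝ} (hC : C.IsHermitian)
    {r : ℝ} (hr : 0 ≤ r) (hev : ∀ i, |hC.eigenvalues i| ≤ r) : ‖C‖ ≤ r := by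
  apply l2_opNorm_le_of_mulVec C hr
  intro x
  set b := hC.eigenvectorBasis with hb
  set y : EuclideanSpace ℝ (Fin m) := (EuclideanSpace.equiv (Fin m) ℝ).symm (C *ᵥ x) with hy
  have hCt : Cᵀ = C := by
    have := hC; rwa [Matrix.IsHermitian, conjTranspose_eq_transpose_of_trivial] at this
  have key : ∀ i, b.repr y i = hC.eigenvalues i * b.repr x i := by
    intro i
    rw [b.repr_apply_apply, b.repr_apply_apply, euc_inner_eq, euc_inner_eq]
    have : (⇑(b i)) ⬝ᵥ (⇑y) = (Cᵀ *ᵥ ⇑(b i)) ⬝ᵥ (⇑x) := by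
      rw [hy]
      show (⇑(b i)) ⬝ᵥ (C *ᵥ ⇑x) = _
      rw [Matrix.dotProduct_mulVec, ← Matrix.mulVec_transpose]
    rw [this, hCt, hC.mulVec_eigenvectorBasis i, smul_dotProduct]
    rfl
  have hnormy : ‖y‖ ^ 2 ≤ (r * ‖x‖) ^ 2 := by
    rw [← b.repr.norm_map y, ← b.repr.norm_map x]
    rw [EuclideanSpace.norm_eq, EuclideanSpace.norm_eq,
      Real.sq_sqrt (by positivity), mul_pow, Real.sq_sqrt (by positivity)]
    rw [Finset.mul_sum]
    apply Finset.sum_le_sum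
    intro i _
    rw [key i]
    have h1 : |hC.eigenvalues i| ≤ r := hev i
    have : ‖hC.eigenvalues i * b.repr x i‖ ^ 2
        = (hC.eigenvalues i) ^ 2 * ‖b.repr x i‖ ^ 2 := by
      rw [norm_mul, mul_pow, Real.norm_eq_abs, sq_abs]
    rw [this]
    have : (hC.eigenvalues i) ^ 2 ≤ r ^ 2 := by
      rw [← sq_abs]; exact pow_le_pow_left₀ (abs_nonneg _) h1 2
    nlinarith [sq_nonneg (‖b.repr x i‖), norm_nonneg (b.repr x i)]
  calc ‖y‖ = Real.sqrt (‖y‖ ^ 2) := (Real.sqrt_sq (norm_nonneg y)).symm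
    _ ≤ Real.sqrt ((r * ‖x‖) ^ 2) := Real.sqrt_le_sqrt hnormy
    _ = r * ‖x‖ := Real.sqrt_sq (by positivity)

/-- For PSD real symmetric matrices `A`, `B`, the spectral norm satisfies
`‖A^{1/2} − B^{1/2}‖ ≤ √‖A − B‖`. -/
theorem opNorm_sqrt_sub_sqrt_le {m : ℕ} (A B : Matrix (Fin m) (Fin m) ℝ)
    (hA : A.PosSemidef) (hB : B.PosSemidef) :
    ‖hA.sqrt - hB.sqrt‖ ≤ Real.sqrt ‖A - B‖ := by
  have hAs := hA.posSemidef_sqrt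
  have hBs := hB.posSemidef_sqrt
  set SA := hA.sqrt with hSA
  set SB := hB.sqrt with hSB
  set C := SA - SB with hCdef
  have hC : C.IsHermitian := hAs.1.sub hBs.1
  apply herm_opNorm_le hC (Real.sqrt_nonneg _)
  intro i
  set t := hC.eigenvalues i with ht
  set v : EuclideanSpace ℝ (Fin m) := hC.eigenvectorBasis i with hv
  have hvC : C *ᵥ ⇑v = t • ⇑v := hC.mulVec_eigenvectorBasis i
  have hvnorm : ‖v‖ = 1 := hC.eigenvectorBasis.orthonormal.1 i
  have hvv : (⇑v) ⬝ᵥ (⇑v) = 1 := by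
    have := euc_inner_eq v v
    rw [real_inner_self_eq_norm_sq, hvnorm] at this
    simpa using this.symm
  set a := (⇑v) ⬝ᵥ (SA *ᵥ ⇑v) with ha
  set b := (⇑v) ⬝ᵥ (SB *ᵥ ⇑v) with hb
  have ha0 : 0 ≤ a := by
    have := hAs.dotProduct_mulVec_nonneg ⇑v
    simpa using this
  have hb0 : 0 ≤ b := by
    have := hBs.dotProduct_mulVec_nonneg ⇑v
    simpa using this
  have hab : a - b = t := by
    have : a - b = (⇑v) ⬝ᵥ (C *ᵥ ⇑v) := by
      rw [hCdef, Matrix.sub_mulVec, dotProduct_sub]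
    rw [this, hvC, dotProduct_smul, smul_eq_mul, hvv, mul_one]
  -- key identity : v ⬝ᵥ ((A - B) *ᵥ v) = t * (a + b)
  have hdecomp : A - B = SA * C + C * SB := by
    rw [hCdef, Matrix.mul_sub, Matrix.sub_mul, hA.sqrt_mul_self, hB.sqrt_mul_self]
    abel
  have hkey : (⇑v) ⬝ᵥ ((A - B) *ᵥ ⇑v) = t * (a + b) := by
    rw [hdecomp, Matrix.add_mulVec, dotProduct_add, ← Matrix.mulVec_mulVec,
      ← Matrix.mulVec_mulVec, hvC, Matrix.mulVec_smul, dotProduct_smul]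
    have hCt : Cᵀ = C := by
      have := hC; rwa [Matrix.IsHermitian, conjTranspose_eq_transpose_of_trivial] at this
    have : (⇑v) ⬝ᵥ (C *ᵥ (SB *ᵥ ⇑v)) = (C *ᵥ ⇑v) ⬝ᵥ (SB *ᵥ ⇑v) := by
      rw [Matrix.dotProduct_mulVec, ← Matrix.mulVec_transpose, hCt]
    rw [this, hvC, smul_dotProduct]
    simp [smul_eq_mul]
    ring
  -- Cauchy-Schwarz bound
  have hcs : |(⇑v) ⬝ᵥ ((A - B) *ᵥ ⇑v)| ≤ ‖A - B‖ := by
    have h1 : (⇑v) ⬝ᵥ ((A - B) *ᵥ ⇑v)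
        = ⟪v, (EuclideanSpace.equiv (Fin m) ℝ).symm ((A - B) *ᵥ ⇑v)⟫ := by
      rw [euc_inner_eq]; rfl
    rw [h1]
    calc |⟪v, (EuclideanSpace.equiv (Fin m) ℝ).symm ((A - B) *ᵥ ⇑v)⟫|
        ≤ ‖v‖ * ‖(EuclideanSpace.equiv (Fin m) ℝ).symm ((A - B) *ᵥ ⇑v)‖ :=
          abs_real_inner_le_norm _ _
      _ ≤ ‖v‖ * (‖A - B‖ * ‖v‖) := by
          apply mul_le_mul_of_nonneg_left _ (norm_nonneg v)
          exact Matrix.l2_opNorm_mulVec (A - B) v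
      _ = ‖A - B‖ := by rw [hvnorm]; ring
  -- combine: t^2 ≤ ‖A - B‖
  have habs : |t| ≤ a + b := by
    rcases abs_cases t with ⟨h1, _⟩ | ⟨h1, _⟩ <;> rw [h1] <;> linarith
  have ht2 : t ^ 2 ≤ ‖A - B‖ := by
    have h2 : |t * (a + b)| = |t| * (a + b) := by
      rw [abs_mul, abs_of_nonneg (by linarith : (0:ℝ) ≤ a + b)]
    have h3 : t ^ 2 ≤ |t| * (a + b) := by
      nlinarith [abs_nonneg t, sq_abs t]
    calc t ^ 2 ≤ |t| * (a + b) := h3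
      _ = |t * (a + b)| := h2.symm
      _ = |(⇑v) ⬝ᵥ ((A - B) *ᵥ ⇑v)| := by rw [hkey]
      _ ≤ ‖A - B‖ := hcs
  calc |t| = Real.sqrt (t ^ 2) := (Real.sqrt_sq_eq_abs t).symm
    _ ≤ Real.sqrt ‖A - B‖ := Real.sqrt_le_sqrt ht2
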